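/- Let K be a traceless totally symmetric cubic form on R^3_1 invariant under C_{1,m} = [[1,-m,-m²/2],[0,1,m],[0,0,1]] for some m ≠ 0 (expressed in an LVB). Then all LVB coefficients of K vanish except possibly b_7, i.e., K(X,X) = b_7 z² e where z is the f-component of X. -/
import Mathlib


open Matrix

/-- Inner product of `ℝ³₁` in a light-vector basis `{e,v,f}`. -/
def ipL (x y : Fin 3 → ℝ) : ℝ := x 0 * y 2 + x 2 * y 0 + x 1 * y 1

/-- The light-vector basis `{e,v,f}` in coordinates. -/
def bas : Fin 3 → Fin 3 → ℝ := ![![1, 0, 0], ![0, 1, 0], ![0, 0, 1]]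

/-- The matrix `C_{1,m}` with respect to the LVB. -/
noncomputable def C1m (m : ℝ) : Matrix (Fin 3) (Fin 3) ℝ :=
  !![1, -m, -(m ^ 2 / 2); 0, 1, m; 0, 0, 1]

/-- If a traceless totally symmetric cubic form `K` on `ℝ³₁` is invariant under
`C_{1,m}` for some `m ≠ 0`, then all LVB coefficients of `K` vanish except
possibly `b₇ = (K(f,f))_e`; equivalently `K(X,X) = b₇ z² e` where `z` is the
`f`-component of `X`. -/
theorem stmt9 (K : (Fin 3 → ℝ) →ₗ[ℝ] (Fin 3 → ℝ) →ₗ[ℝ] (Fin 3 → ℝ))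
    (hsymm : ∀ X Y, K X Y = K Y X)
    (htot : ∀ X Y Z, ipL (K X Y) Z = ipL (K X Z) Y)
    (htr : ∀ X, ∑ i, K X (bas i) i = 0)
    (m : ℝ) (hm : m ≠ 0)
    (hinv : ∀ X Y Z, ipL (K ((C1m m).mulVec X) ((C1m m).mulVec Y))
      ((C1m m).mulVec Z) = ipL (K X Y) Z) :
    K (bas 0) (bas 0) = 0 ∧ K (bas 0) (bas 1) 0 = 0 ∧ K (bas 0) (bas 2) 0 = 0 ∧
    K (bas 2) (bas 2) 1 = 0 ∧
    ∀ X : Fin 3 → ℝ, K X X = (K (bas 2) (bas 2) 0 * (X 2) ^ 2) • bas 0 := by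
  have cancel : ∀ x : ℝ, m * x = 0 → x = 0 := by
    intro x h
    rcases mul_eq_zero.mp h with h | h
    · exact absurd h hm
    · exact h
  have hC0 : (C1m m).mulVec (bas 0) = bas 0 := by
    funext i; fin_cases i <;> simp [C1m, bas, mulVec, dotProduct, Fin.sum_univ_three]
  have hC1 : (C1m m).mulVec (bas 1) = (-m) • bas 0 + bas 1 := by
    funext i; fin_cases i <;> simp [C1m, bas, mulVec, dotProduct, Fin.sum_univ_three]
  have hC2 : (C1m m).mulVec (bas 2) = (-(m^2/2)) • bas 0 + m • bas 1 + bas 2 := by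
    funext i; fin_cases i <;> simp [C1m, bas, mulVec, dotProduct, Fin.sum_univ_three]
  have ipl1 : ∀ (a b c : Fin 3 → ℝ), ipL (a+b) c = ipL a c + ipL b c := by
    intros; simp [ipL]; ring
  have ipl2 : ∀ (r : ℝ) (a c : Fin 3 → ℝ), ipL (r • a) c = r * ipL a c := by
    intros; simp [ipL]; ring
  have ipr1 : ∀ (a b c : Fin 3 → ℝ), ipL a (b+c) = ipL a b + ipL a c := by
    intros; simp [ipL]; ring
  have ipr2 : ∀ (a : Fin 3 → ℝ) (r : ℝ) (c : Fin 3 → ℝ), ipL a (r • c) = r * ipL a c := by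
    intros; simp [ipL]; ring
  -- component extraction lemmas
  have b00 : bas 0 0 = 1 := rfl
  have b01 : bas 0 1 = 0 := rfl
  have b02 : bas 0 2 = 0 := rfl
  have b10 : bas 1 0 = 0 := rfl
  have b11 : bas 1 1 = 1 := rfl
  have b12 : bas 1 2 = 0 := rfl
  have b20 : bas 2 0 = 0 := rfl
  have b21 : bas 2 1 = 0 := rfl
  have b22 : bas 2 2 = 1 := rfl
  have hW0 : ∀ W : Fin 3 → ℝ, ipL W (bas 2) = W 0 := by
    intro W; show W 0 * bas 2 2 + W 2 * bas 2 0 + W 1 * bas 2 1 = W 0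
    rw [b22, b20, b21]; ring
  have hW1 : ∀ W : Fin 3 → ℝ, ipL W (bas 1) = W 1 := by
    intro W; show W 0 * bas 1 2 + W 2 * bas 1 0 + W 1 * bas 1 1 = W 1
    rw [b12, b10, b11]; ring
  have hW2 : ∀ W : Fin 3 → ℝ, ipL W (bas 0) = W 2 := by
    intro W; show W 0 * bas 0 2 + W 2 * bas 0 0 + W 1 * bas 0 1 = W 2
    rw [b02, b00, b01]; ring
  -- symmetry in the first two slots, lifted through ipL
  have s2 : ∀ X Y Z : Fin 3 → ℝ, ipL (K X Y) Z = ipL (K Y X) Z := by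
    intro X Y Z; rw [hsymm]
  -- normalization lemmas: rewrite any ipL (K (bas i) (bas j)) (bas k) to sorted indices
  have N010 : ipL (K (bas 0) (bas 1)) (bas 0) = ipL (K (bas 0) (bas 0)) (bas 1) := htot _ _ _
  have N020 : ipL (K (bas 0) (bas 2)) (bas 0) = ipL (K (bas 0) (bas 0)) (bas 2) := htot _ _ _
  have N021 : ipL (K (bas 0) (bas 2)) (bas 1) = ipL (K (bas 0) (bas 1)) (bas 2) := htot _ _ _
  have N110 : ipL (K (bas 1) (bas 1)) (bas 0) = ipL (K (bas 0) (bas 1)) (bas 1) := by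
    rw [htot, hsymm]
  have N120 : ipL (K (bas 1) (bas 2)) (bas 0) = ipL (K (bas 0) (bas 1)) (bas 2) := by
    rw [htot, hsymm]
  have N121 : ipL (K (bas 1) (bas 2)) (bas 1) = ipL (K (bas 1) (bas 1)) (bas 2) := htot _ _ _
  have N220 : ipL (K (bas 2) (bas 2)) (bas 0) = ipL (K (bas 0) (bas 2)) (bas 2) := by
    rw [htot, hsymm]
  have N221 : ipL (K (bas 2) (bas 2)) (bas 1) = ipL (K (bas 1) (bas 2)) (bas 2) := by
    rw [htot, hsymm]
  have N100 : ipL (K (bas 1) (bas 0)) (bas 0) = ipL (K (bas 0) (bas 0)) (bas 1) := by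
    rw [s2, htot]
  have N101 : ipL (K (bas 1) (bas 0)) (bas 1) = ipL (K (bas 0) (bas 1)) (bas 1) := s2 _ _ _
  have N102 : ipL (K (bas 1) (bas 0)) (bas 2) = ipL (K (bas 0) (bas 1)) (bas 2) := s2 _ _ _
  have N200 : ipL (K (bas 2) (bas 0)) (bas 0) = ipL (K (bas 0) (bas 0)) (bas 2) := by
    rw [s2, htot]
  have N201 : ipL (K (bas 2) (bas 0)) (bas 1) = ipL (K (bas 0) (bas 1)) (bas 2) := by
    rw [s2, htot]
  have N202 : ipL (K (bas 2) (bas 0)) (bas 2) = ipL (K (bas 0) (bas 2)) (bas 2) := s2 _ _ _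
  have N210 : ipL (K (bas 2) (bas 1)) (bas 0) = ipL (K (bas 0) (bas 1)) (bas 2) := by
    rw [s2, htot, s2]
  have N211 : ipL (K (bas 2) (bas 1)) (bas 1) = ipL (K (bas 1) (bas 1)) (bas 2) := by
    rw [s2, htot]
  have N212 : ipL (K (bas 2) (bas 1)) (bas 2) = ipL (K (bas 1) (bas 2)) (bas 2) := s2 _ _ _
  -- the invariance equations
  have E001 := hinv (bas 0) (bas 0) (bas 1)
  have E011 := hinv (bas 0) (bas 1) (bas 1)
  have E111 := hinv (bas 1) (bas 1) (bas 1)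
  have E112 := hinv (bas 1) (bas 1) (bas 2)
  have E122 := hinv (bas 1) (bas 2) (bas 2)
  have E222 := hinv (bas 2) (bas 2) (bas 2)
  simp only [hC0, hC1, hC2, map_add, _root_.map_smul, LinearMap.add_apply,
    LinearMap.smul_apply, ipl1, ipl2, ipr1, ipr2, smul_eq_mul,
    N010, N020, N021, N110, N120, N121, N220, N221, N100, N101, N102,
    N200, N201, N202, N210, N211, N212] at E001 E011 E111 E112 E122 E222
  -- the trace equations
  have Tr0 := htr (bas 0)
  have Tr1 := htr (bas 1)
  have Tr2 := htr (bas 2)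
  simp only [Fin.sum_univ_three, ← hW0, ← hW1, ← hW2,
    N010, N020, N021, N110, N120, N121, N220, N221, N100, N101, N102,
    N200, N201, N202, N210, N211, N212] at Tr0 Tr1 Tr2
  -- solve for the coefficients one by one
  have h000 : ipL (K (bas 0) (bas 0)) (bas 0) = 0 := cancel _ (by linear_combination -E001)
  rw [h000] at E011 E111 E112 E122 E222
  have h001 : ipL (K (bas 0) (bas 0)) (bas 1) = 0 :=
    cancel _ (by linear_combination (-1/2 : ℝ) * E011)
  rw [h001] at E111 E112 E122 E222
  have h011 : ipL (K (bas 0) (bas 1)) (bas 1) = 0 :=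
    cancel _ (by linear_combination (-1/3 : ℝ) * E111)
  rw [h011] at E112 E122 E222 Tr0
  have h002 : ipL (K (bas 0) (bas 0)) (bas 2) = 0 := by linear_combination (1/2 : ℝ) * Tr0
  rw [h002] at E112 E122 E222
  have h012 : ipL (K (bas 0) (bas 1)) (bas 2) = 0 :=
    cancel _ (by linear_combination (-1/4 : ℝ) * E112 + (m/4) * Tr1)
  rw [h012] at E112 E122 E222 Tr1
  have h111 : ipL (K (bas 1) (bas 1)) (bas 1) = 0 := by linear_combination Tr1
  rw [h111] at E122 E222
  have h112 : ipL (K (bas 1) (bas 1)) (bas 2) = 0 :=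
    cancel _ (by linear_combination (2/5 : ℝ) * E122 + (m/5) * Tr2)
  rw [h112] at E122 E222 Tr2
  have h022 : ipL (K (bas 0) (bas 2)) (bas 2) = 0 := by linear_combination (1/2 : ℝ) * Tr2
  rw [h022] at E222
  have h122 : ipL (K (bas 1) (bas 2)) (bas 2) = 0 :=
    cancel _ (by linear_combination (1/3 : ℝ) * E222)
  -- component facts
  have z000 : K (bas 0) (bas 0) 0 = 0 := by rw [← hW0 (K (bas 0) (bas 0))]; exact h002
  have z001 : K (bas 0) (bas 0) 1 = 0 := by rw [← hW1 (K (bas 0) (bas 0))]; exact h001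
  have z002 : K (bas 0) (bas 0) 2 = 0 := by rw [← hW2 (K (bas 0) (bas 0))]; exact h000
  have z010 : K (bas 0) (bas 1) 0 = 0 := by rw [← hW0 (K (bas 0) (bas 1))]; exact h012
  have z011 : K (bas 0) (bas 1) 1 = 0 := by rw [← hW1 (K (bas 0) (bas 1))]; exact h011
  have z012 : K (bas 0) (bas 1) 2 = 0 := by rw [← hW2 (K (bas 0) (bas 1)), N010]; exact h001
  have z020 : K (bas 0) (bas 2) 0 = 0 := by rw [← hW0 (K (bas 0) (bas 2))]; exact h022
  have z021 : K (bas 0) (bas 2) 1 = 0 := by rw [← hW1 (K (bas 0) (bas 2)), N021]; exact h012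
  have z022 : K (bas 0) (bas 2) 2 = 0 := by rw [← hW2 (K (bas 0) (bas 2)), N020]; exact h002
  have z110 : K (bas 1) (bas 1) 0 = 0 := by rw [← hW0 (K (bas 1) (bas 1))]; exact h112
  have z111 : K (bas 1) (bas 1) 1 = 0 := by rw [← hW1 (K (bas 1) (bas 1))]; exact h111
  have z112 : K (bas 1) (bas 1) 2 = 0 := by rw [← hW2 (K (bas 1) (bas 1)), N110]; exact h011
  have z120 : K (bas 1) (bas 2) 0 = 0 := by rw [← hW0 (K (bas 1) (bas 2))]; exact h122
  have z121 : K (bas 1) (bas 2) 1 = 0 := by rw [← hW1 (K (bas 1) (bas 2)), N121]; exact h112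
  have z122 : K (bas 1) (bas 2) 2 = 0 := by rw [← hW2 (K (bas 1) (bas 2)), N120]; exact h012
  have z221 : K (bas 2) (bas 2) 1 = 0 := by rw [← hW1 (K (bas 2) (bas 2)), N221]; exact h122
  have z222 : K (bas 2) (bas 2) 2 = 0 := by rw [← hW2 (K (bas 2) (bas 2)), N220]; exact h022
  -- vector facts
  have v00 : K (bas 0) (bas 0) = 0 := by
    funext k; fin_cases k
    · exact z000
    · exact z001
    · exact z002
  have v01 : K (bas 0) (bas 1) = 0 := by
    funext k; fin_cases k
    · exact z010
    · exact z011
    · exact z012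
  have v02 : K (bas 0) (bas 2) = 0 := by
    funext k; fin_cases k
    · exact z020
    · exact z021
    · exact z022
  have v11 : K (bas 1) (bas 1) = 0 := by
    funext k; fin_cases k
    · exact z110
    · exact z111
    · exact z112
  have v12 : K (bas 1) (bas 2) = 0 := by
    funext k; fin_cases k
    · exact z120
    · exact z121
    · exact z122
  obtain ⟨c, hc⟩ : ∃ c : ℝ, c = K (bas 2) (bas 2) 0 := ⟨_, rfl⟩
  have v22 : K (bas 2) (bas 2) = c • bas 0 := by
    funext k
    fin_cases k
    · show K (bas 2) (bas 2) 0 = (c • bas 0) 0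
      rw [Pi.smul_apply, b00, smul_eq_mul, mul_one, hc]
    · show K (bas 2) (bas 2) 1 = (c • bas 0) 1
      rw [Pi.smul_apply, b01, smul_eq_mul, mul_zero]; exact z221
    · show K (bas 2) (bas 2) 2 = (c • bas 0) 2
      rw [Pi.smul_apply, b02, smul_eq_mul, mul_zero]; exact z222
  have v10 : K (bas 1) (bas 0) = 0 := by rw [hsymm]; exact v01
  have v20 : K (bas 2) (bas 0) = 0 := by rw [hsymm]; exact v02
  have v21 : K (bas 2) (bas 1) = 0 := by rw [hsymm]; exact v12
  refine ⟨v00, z010, z020, z221, ?_⟩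
  intro X
  rw [← hc]
  have hX : X = X 0 • bas 0 + X 1 • bas 1 + X 2 • bas 2 := by
    funext i; fin_cases i <;> simp [bas]
  conv_lhs => rw [hX]
  simp only [map_add, _root_.map_smul, LinearMap.add_apply, LinearMap.smul_apply,
    v00, v01, v02, v10, v11, v12, v20, v21, v22, smul_zero, zero_add, add_zero,
    smul_smul]
  congr 1
  ring
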